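/- Let A be a finite set, β > 0, R ≥ 0, π_ref a full-support probability mass function on A, r*: A → [0, R], and let π* be the Gibbs policy π*(a) ∝ π_ref(a)exp(r*(a)/β). Suppose π is a full-support probability mass function on A satisfying |log(π(a)/π_ref(a))| ≤ R/β for all a. Then the coverage coefficient Cov(π*|π) := Σ_a π*(a)²/π(a) satisfies Cov(π*|π) ≤ 1 + κ(e^{2R/β})·KL(π‖π*), where κ(x) = (x − 1)²/(x − 1 − log x). -/

import Mathlib

lemma log_lb {u : ℝ} (hu : 0 ≤ u) : u - u ^ 2 / 2 ≤ Real.log (1 + u) := by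
  set f : ℝ → ℝ := fun u => Real.log (1 + u) - u + u ^ 2 / 2 with hf
  have hd : ∀ x : ℝ, 0 < 1 + x →
      HasDerivAt f (1 / (1 + x) - 1 + x) x := by
    intro x hx
    have h := ((((hasDerivAt_id x).const_add 1).log hx.ne').sub (hasDerivAt_id x)).add
      ((hasDerivAt_pow 2 x).div_const 2)
    convert h using 1
    · rfl
    · rfl
    · rfl
    · simp
  have key : MonotoneOn f (Set.Ici 0) := by
    apply monotoneOn_of_deriv_nonneg (convex_Ici 0)
    · apply ContinuousOn.add
      · apply ContinuousOn.sub
        · apply ContinuousOn.log (by fun_prop)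
          intro x hx
          simp only [Set.mem_Ici] at hx
          positivity
        · fun_prop
      · fun_prop
    · intro x hx
      rw [interior_Ici] at hx
      have hx' : (0:ℝ) < x := hx
      exact (hd x (by linarith)).differentiableAt.differentiableWithinAt
    · intro x hx
      rw [interior_Ici] at hx
      have hx' : (0:ℝ) < x := hx
      have h1 : (0:ℝ) < 1 + x := by linarith
      rw [(hd x h1).deriv]
      have : 1 / (1+x) - 1 + x = x ^ 2 / (1 + x) := by
        field_simp; ring
      rw [this]; positivity
  have h0 := key (Set.mem_Ici.2 le_rfl) (Set.mem_Ici.2 hu) hu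
  simp only [hf, add_zero, Real.log_one] at h0
  norm_num at h0
  linarith

lemma key_pointwise {ζ t : ℝ} (hζ : 1 < ζ) (ht : 0 < t) (htζ : t ≤ ζ) :
    (t - 1) ^ 2 ≤ (ζ - 1) ^ 2 / (ζ - 1 - Real.log ζ) * (t - 1 - Real.log t) := by
  have hζ0 : (0:ℝ) < ζ := by linarith
  have hdpos : 0 < ζ - 1 - Real.log ζ := by
    have := Real.log_lt_sub_one_of_pos hζ0 (by linarith)
    linarith
  set κ : ℝ := (ζ - 1) ^ 2 / (ζ - 1 - Real.log ζ) with hκ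
  have hκ2 : 2 ≤ κ := by
    have h1 := log_lb (u := ζ - 1) (by linarith)
    rw [show (1 : ℝ) + (ζ - 1) = ζ by ring] at h1
    rw [hκ, le_div_iff₀ hdpos]
    nlinarith
  have hκζd : κ * (ζ - 1 - Real.log ζ) = (ζ - 1) ^ 2 := by
    rw [hκ]; field_simp
  set h : ℝ → ℝ := fun s => κ * (s - 1 - Real.log s) - (s - 1) ^ 2 with hh
  have hd : ∀ s : ℝ, 0 < s →
      HasDerivAt h (κ * (1 - s⁻¹) - 2 * (s - 1) ^ 1 * 1) s := by
    intro s hs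
    exact (((hasDerivAt_id s).sub_const 1).sub (Real.hasDerivAt_log hs.ne')).const_mul κ
      |>.sub (((hasDerivAt_id s).sub_const 1).pow 2)
  have hcont : ∀ s : Set ℝ, s ⊆ Set.Ioi 0 → ContinuousOn h s := by
    intro s hs
    apply ContinuousOn.sub
    · exact continuousOn_const.mul ((ContinuousOn.sub (by fun_prop)
        (ContinuousOn.log (by fun_prop) fun x hx => ne_of_gt (hs hx))))
    · fun_prop
  have h1 : h 1 = 0 := by simp [hh]
  have hζval : h ζ = 0 := by rw [hh]; simp only; rw [hκζd]; ring
  have goal0 : 0 ≤ h t → (t - 1) ^ 2 ≤ κ * (t - 1 - Real.log t) := by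
    intro hge; rw [hh] at hge; simp only at hge; linarith
  apply goal0
  rcases le_or_gt t 1 with hcase | hcase
  · -- h antitone on [t,1]
    have hanti : AntitoneOn h (Set.Icc t 1) := by
      apply antitoneOn_of_deriv_nonpos (convex_Icc t 1)
      · apply hcont; intro x hx; exact lt_of_lt_of_le ht hx.1
      · intro x hx
        rw [interior_Icc] at hx
        have hx0 : 0 < x := lt_trans ht hx.1
        exact (hd x hx0).differentiableAt.differentiableWithinAt
      · intro x hx
        rw [interior_Icc] at hx
        have hx0 : 0 < x := lt_trans ht hx.1
        have hx1 : x < 1 := hx.2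
        rw [(hd x hx0).deriv]
        have hinv : x * x⁻¹ = 1 := mul_inv_cancel₀ hx0.ne'
        have h2 : κ * (1 - x⁻¹) ≤ 2 * (1 - x⁻¹) := by
          have : (1 : ℝ) - x⁻¹ ≤ 0 := by
            rw [sub_nonpos]
            exact one_le_inv₀ hx0 |>.2 hx1.le
          nlinarith
        have h3 : 2 * (1 - x⁻¹) ≤ 2 * (x - 1) := by
          have : (1:ℝ) - x⁻¹ ≤ x - 1 := by
            nlinarith [hinv, sq_nonneg (x - 1), hx0]
          linarith
        simp only [pow_one, mul_one]
        linarith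
    have := hanti (Set.mem_Icc.2 ⟨le_rfl, hcase⟩) (Set.mem_Icc.2 ⟨hcase, le_rfl⟩) hcase
    rw [h1] at this; exact this
  · rcases le_or_gt (2 * t) κ with hsub | hsub
    · -- h monotone on [1,t]
      have hmono : MonotoneOn h (Set.Icc 1 t) := by
        apply monotoneOn_of_deriv_nonneg (convex_Icc 1 t)
        · apply hcont; intro x hx; exact lt_of_lt_of_le one_pos hx.1
        · intro x hx
          rw [interior_Icc] at hx
          have hx0 : 0 < x := lt_trans one_pos hx.1
          exact (hd x hx0).differentiableAt.differentiableWithinAt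
        · intro x hx
          rw [interior_Icc] at hx
          have hx1 : 1 < x := hx.1
          have hx0 : 0 < x := lt_trans one_pos hx1
          rw [(hd x hx0).deriv]
          have hinv : x * x⁻¹ = 1 := mul_inv_cancel₀ hx0.ne'
          have hxκ : 2 * x ≤ κ := by linarith [hx.2, hsub]
          have hnn : (0:ℝ) ≤ 1 - x⁻¹ := by
            rw [sub_nonneg]
            exact inv_le_one_of_one_le₀ hx1.le
          have : 2 * x * (1 - x⁻¹) ≤ κ * (1 - x⁻¹) := by nlinarith
          have h2 : 2 * x * (1 - x⁻¹) = 2 * (x - 1) := by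
            field_simp
          simp only [pow_one, mul_one]
          linarith
      have := hmono (Set.mem_Icc.2 ⟨le_rfl, hcase.le⟩)
        (Set.mem_Icc.2 ⟨hcase.le, le_rfl⟩) hcase.le
      rw [h1] at this; exact this
    · -- h antitone on [t,ζ]
      have hanti : AntitoneOn h (Set.Icc t ζ) := by
        apply antitoneOn_of_deriv_nonpos (convex_Icc t ζ)
        · apply hcont; intro x hx; exact lt_of_lt_of_le ht hx.1
        · intro x hx
          rw [interior_Icc] at hx
          have hx0 : 0 < x := lt_trans ht hx.1
          exact (hd x hx0).differentiableAt.differentiableWithinAt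
        · intro x hx
          rw [interior_Icc] at hx
          have hxt : t < x := hx.1
          have hx1 : 1 < x := lt_trans hcase hxt
          have hx0 : 0 < x := lt_trans one_pos hx1
          rw [(hd x hx0).deriv]
          have hinv : x * x⁻¹ = 1 := mul_inv_cancel₀ hx0.ne'
          have hκx : κ ≤ 2 * x := by linarith
          have hnn : (0:ℝ) ≤ 1 - x⁻¹ := by
            rw [sub_nonneg]
            exact inv_le_one_of_one_le₀ hx1.le
          have : κ * (1 - x⁻¹) ≤ 2 * x * (1 - x⁻¹) := by nlinarith
          have h2 : 2 * x * (1 - x⁻¹) = 2 * (x - 1) := by field_simp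
          simp only [pow_one, mul_one]
          linarith
      have := hanti (Set.mem_Icc.2 ⟨le_rfl, htζ⟩)
        (Set.mem_Icc.2 ⟨htζ, le_rfl⟩) htζ
      rw [hζval] at this; exact this

theorem coverage_le_one_add_kappa_mul_kl
    {A : Type*} [Fintype A] [Nonempty A]
    (β R : ℝ) (hβ : 0 < β) (hR : 0 ≤ R)
    (πref πstar π : A → ℝ) (rstar : A → ℝ)
    (href_pos : ∀ a, 0 < πref a) (href_sum : ∑ a, πref a = 1)
    (hr : ∀ a, rstar a ∈ Set.Icc 0 R)
    (Z : ℝ) (hZ : Z = ∑ a, πref a * Real.exp (rstar a / β))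
    (hgibbs : ∀ a, πstar a = πref a * Real.exp (rstar a / β) / Z)
    (hπ_pos : ∀ a, 0 < π a) (hπ_sum : ∑ a, π a = 1)
    (hπ_ratio : ∀ a, |Real.log (π a / πref a)| ≤ R / β) :
    ∑ a, (πstar a) ^ 2 / π a ≤
      1 + ((Real.exp (2 * R / β) - 1) ^ 2 /
            (Real.exp (2 * R / β) - 1 - Real.log (Real.exp (2 * R / β)))) *
          ∑ a, π a * Real.log (π a / πstar a) := by
  have hZpos : 0 < Z := by
    rw [hZ]
    exact Finset.sum_pos (fun a _ => mul_pos (href_pos a) (Real.exp_pos _))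
      Finset.univ_nonempty
  have hstar_pos : ∀ a, 0 < πstar a := fun a => by
    rw [hgibbs a]
    exact div_pos (mul_pos (href_pos a) (Real.exp_pos _)) hZpos
  have hstar_sum : ∑ a, πstar a = 1 := by
    simp only [hgibbs]
    rw [← Finset.sum_div, ← hZ, div_self hZpos.ne']
  rcases eq_or_lt_of_le hR with hR0 | hRpos
  · -- degenerate case R = 0
    have hr0 : ∀ a, rstar a = 0 := fun a =>
      le_antisymm (by rw [← hR0] at hr; exact (hr a).2) (hr a).1
    have hZ1 : Z = 1 := by rw [hZ]; simp [hr0, href_sum]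
    have hps : ∀ a, πstar a = πref a := fun a => by
      rw [hgibbs a, hr0, hZ1]; simp
    have hpe : ∀ a, π a = πref a := by
      intro a
      have h1 := hπ_ratio a
      rw [← hR0, zero_div, abs_nonpos_iff] at h1
      have h2 : π a / πref a = 1 := by
        rcases Real.log_eq_zero.1 h1 with h | h | h
        · exact absurd h (div_pos (hπ_pos a) (href_pos a)).ne'
        · exact h
        · nlinarith [div_pos (hπ_pos a) (href_pos a)]
      exact (div_eq_one_iff_eq (href_pos a).ne').1 h2
    have l1 : ∑ a, (πstar a) ^ 2 / π a = 1 := by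
      rw [← href_sum]
      apply Finset.sum_congr rfl
      intro a _
      rw [hps a, hpe a, sq, mul_div_assoc, div_self (href_pos a).ne', mul_one]
    have l2 : ∑ a, π a * Real.log (π a / πstar a) = 0 := by
      apply Finset.sum_eq_zero
      intro a _
      rw [hps a, hpe a, div_self (href_pos a).ne', Real.log_one, mul_zero]
    rw [l1, l2, mul_zero]
    norm_num
  · -- main case R > 0
    set ζ : ℝ := Real.exp (2 * R / β) with hζdef
    have hζ : 1 < ζ := by
      rw [hζdef, show (1:ℝ) = Real.exp 0 by simp]
      exact Real.exp_lt_exp.2 (div_pos (by linarith) hβ)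
    have hZ1 : 1 ≤ Z := by
      rw [hZ, ← href_sum]
      apply Finset.sum_le_sum
      intro a _
      exact le_mul_of_one_le_right (href_pos a).le
        (Real.one_le_exp (div_nonneg (hr a).1 hβ.le))
    have href_le : ∀ a, πref a ≤ Real.exp (R / β) * π a := by
      intro a
      have h2 : (Real.exp (R / β))⁻¹ ≤ π a / πref a := by
        rw [← Real.exp_neg]
        exact (Real.le_log_iff_exp_le (div_pos (hπ_pos a) (href_pos a))).1
          ((abs_le.1 (hπ_ratio a)).1)
      have h3 := (le_div_iff₀ (href_pos a)).1 h2
      have h4 := mul_le_mul_of_nonneg_left h3 (Real.exp_pos (R / β)).le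
      calc πref a = Real.exp (R / β) * ((Real.exp (R / β))⁻¹ * πref a) := by
            field_simp
        _ ≤ Real.exp (R / β) * π a := h4
    have hstar_le : ∀ a, πstar a ≤ ζ * π a := by
      intro a
      rw [hgibbs a]
      have e1 : πref a * Real.exp (rstar a / β) / Z ≤ πref a * Real.exp (rstar a / β) :=
        div_le_self (mul_pos (href_pos a) (Real.exp_pos _)).le hZ1
      have e2 : πref a * Real.exp (rstar a / β) ≤
          (Real.exp (R / β) * π a) * Real.exp (R / β) := by
        apply mul_le_mul (href_le a) (Real.exp_le_exp.2 (by gcongr; exact (hr a).2))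
          (Real.exp_pos _).le (mul_pos (Real.exp_pos _) (hπ_pos a)).le
      have e3 : (Real.exp (R / β) * π a) * Real.exp (R / β) = ζ * π a := by
        rw [hζdef, show 2 * R / β = R / β + R / β by ring, Real.exp_add]
        ring
      linarith
    set κ : ℝ := (ζ - 1) ^ 2 / (ζ - 1 - Real.log ζ) with hκdef
    clear_value κ
    have hpt : ∀ a, π a * (πstar a / π a - 1) ^ 2 ≤
        π a * (κ * (πstar a / π a - 1 - Real.log (πstar a / π a))) := by
      intro a
      apply mul_le_mul_of_nonneg_left _ (hπ_pos a).le
      rw [hκdef]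
      exact key_pointwise hζ (div_pos (hstar_pos a) (hπ_pos a))
        ((div_le_iff₀ (hπ_pos a)).2 (by linarith [hstar_le a, mul_comm ζ (π a)]))
    have hsum := Finset.sum_le_sum (fun a (_ : a ∈ Finset.univ) => hpt a)
    have l1 : ∑ a, π a * (πstar a / π a - 1) ^ 2 = (∑ a, (πstar a) ^ 2 / π a) - 1 := by
      have : ∀ a : A, π a * (πstar a / π a - 1) ^ 2 =
          (πstar a) ^ 2 / π a - 2 * πstar a + π a := by
        intro a
        have hπa := (hπ_pos a).ne'
        field_simp
        ring
      rw [Finset.sum_congr rfl (fun a _ => this a), Finset.sum_add_distrib,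
        Finset.sum_sub_distrib, ← Finset.mul_sum, hstar_sum, hπ_sum]
      ring
    have l2 : ∑ a, π a * (κ * (πstar a / π a - 1 - Real.log (πstar a / π a))) =
        κ * ∑ a, π a * Real.log (π a / πstar a) := by
      have : ∀ a : A, π a * (κ * (πstar a / π a - 1 - Real.log (πstar a / π a))) =
          κ * (πstar a - π a + π a * Real.log (π a / πstar a)) := by
        intro a
        have hπa := (hπ_pos a).ne'
        have ht : π a * (πstar a / π a) = πstar a := by
          rw [mul_comm]; exact div_mul_cancel₀ _ hπa
        rw [Real.log_div (hstar_pos a).ne' (hπ_pos a).ne',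
          Real.log_div (hπ_pos a).ne' (hstar_pos a).ne']
        calc π a * (κ * (πstar a / π a - 1 - (Real.log (πstar a) - Real.log (π a))))
            = κ * (π a * (πstar a / π a) - π a
                + π a * (Real.log (π a) - Real.log (πstar a))) := by ring
          _ = κ * (πstar a - π a + π a * (Real.log (π a) - Real.log (πstar a))) := by
              rw [ht]
      rw [Finset.sum_congr rfl (fun a _ => this a), ← Finset.mul_sum,
        Finset.sum_add_distrib, Finset.sum_sub_distrib, hstar_sum, hπ_sum]
      ring
    rw [l1, l2] at hsum
    linarith
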